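/- Let $f : (0,\infty) \to [0,\infty)$ be nonincreasing and locally absolutely continuous, and suppose there exist $c_1, c_2 > 0$ such that $c_1 f(r)^{(d-1)/d} \le c_2 f(r) - f'(r)$ for almost every $r > 0$, where $d \ge 2$. If $f(r) \to 0$ as $r \to \infty$, then there exists $R_0 > 0$ with $f(R_0) = 0$. -/

import Mathlib

open MeasureTheory

/-- a nonincreasing locally absolutely continuous function satisfying
`c₁ f^((d-1)/d) ≤ c₂ f - f'` a.e. and tending to `0` at infinity must vanish somewhere. -/
theorem vanishing_of_differential_inequality
    (d : ℕ) (hd : 2 ≤ d) (f g : ℝ → ℝ)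
    (hfnn : ∀ r, 0 < r → 0 ≤ f r)
    (hmono : ∀ a b, 0 < a → a ≤ b → f b ≤ f a)
    (hac : ∀ a b, 0 < a → a ≤ b →
      IntervalIntegrable g volume a b ∧ f b - f a = ∫ r in a..b, g r)
    (c1 c2 : ℝ) (hc1 : 0 < c1) (hc2 : 0 < c2)
    (hineq : ∀ᵐ r ∂volume, 0 < r →
      c1 * f r ^ ((d - 1 : ℝ) / d) ≤ c2 * f r - g r)
    (hlim : Filter.Tendsto f Filter.atTop (nhds 0)) :
    ∃ R0 : ℝ, 0 < R0 ∧ f R0 = 0 := by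
  by_contra hcon
  push_neg at hcon
  have hpos : ∀ r, 0 < r → 0 < f r := fun r hr =>
    lt_of_le_of_ne (hfnn r hr) (Ne.symm (hcon r hr))
  set e : ℝ := (d - 1 : ℝ) / d with he
  have hdpos : (0:ℝ) < d := by positivity
  have he0 : 0 ≤ e := by
    apply div_nonneg _ hdpos.le
    have : (1:ℝ) ≤ (d:ℝ) := by exact_mod_cast Nat.one_le_of_lt hd
    linarith
  have hesum : 1 / (d:ℝ) + e = 1 := by rw [he]; field_simp; ring
  -- continuity of f on [a, M] for 0 < a ≤ M
  have hcont : ∀ a M : ℝ, 0 < a → a ≤ M → ContinuousOn f (Set.Icc a M) := by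
    intro a M ha haM
    have hint : IntervalIntegrable g volume a M := (hac a M ha haM).1
    have hprim : ContinuousOn (fun b => ∫ x in a..b, g x) (Set.uIcc a M) :=
      intervalIntegral.continuousOn_primitive_interval' hint Set.left_mem_uIcc
    rw [Set.uIcc_of_le haM] at hprim
    have : ContinuousOn (fun b => f a + ∫ x in a..b, g x) (Set.Icc a M) :=
      continuousOn_const.add hprim
    refine this.congr ?_
    intro x hx
    have := (hac a x ha hx.1).2
    simp only
    linarith
  -- choose R such that f r is small for r ≥ R
  obtain ⟨R1, hR1⟩ := (Filter.tendsto_atTop'.1 hlim) (Set.Iio ((c1/(2*c2)) ^ (d:ℝ)))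
    (Iio_mem_nhds (by positivity))
  set R : ℝ := max R1 1 with hRdef
  have hR0 : (0:ℝ) < R := lt_of_lt_of_le one_pos (le_max_right _ _)
  have hsmall : ∀ r, R ≤ r → f r ^ ((1:ℝ)/d) ≤ c1 / (2*c2) := by
    intro r hr
    have hrpos : 0 < r := lt_of_lt_of_le hR0 hr
    have h1 : f r < (c1/(2*c2)) ^ (d:ℝ) := hR1 r (le_trans (le_max_left _ _) hr)
    have := Real.rpow_le_rpow (hfnn r hrpos) h1.le (by positivity : (0:ℝ) ≤ 1/(d:ℝ))
    rwa [← Real.rpow_mul (by positivity), mul_one_div, div_self hdpos.ne',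
      Real.rpow_one] at this
  -- a.e. inequality: (c1/2) f^e ≤ -g on [R, ∞)
  have hae : ∀ᵐ r ∂volume, R ≤ r → c1/2 * f r ^ e ≤ -g r := by
    filter_upwards [hineq] with r h hr
    have hrpos : 0 < r := lt_of_lt_of_le hR0 hr
    have h1 := h hrpos
    have hfr : 0 < f r := hpos r hrpos
    have hsplit : f r = f r ^ ((1:ℝ)/d) * f r ^ e := by
      rw [← Real.rpow_add hfr, hesum, Real.rpow_one]
    have h2 : c2 * f r ≤ c1/2 * f r ^ e := by
      calc c2 * f r = c2 * (f r ^ ((1:ℝ)/d) * f r ^ e) := by rw [← hsplit]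
        _ = c2 * f r ^ ((1:ℝ)/d) * f r ^ e := by ring
        _ ≤ c2 * (c1/(2*c2)) * f r ^ e := by
            apply mul_le_mul_of_nonneg_right _ (Real.rpow_nonneg hfr.le e)
            exact mul_le_mul_of_nonneg_left (hsmall r hr) hc2.le
        _ = c1/2 * f r ^ e := by field_simp
    linarith
  -- key integral inequality
  have key : ∀ a b, R ≤ a → a ≤ b → c1/2 * (b-a) * f b ^ e ≤ f a - f b := by
    intro a b hRa hab
    have ha0 : 0 < a := lt_of_lt_of_le hR0 hRa
    obtain ⟨hint, heq⟩ := hac a b ha0 hab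
    have hconst : IntervalIntegrable (fun _ => -(c1/2 * f b ^ e)) volume a b :=
      intervalIntegrable_const
    have hb0 : 0 < b := lt_of_lt_of_le ha0 hab
    have hptwise : g ≤ᵐ[volume.restrict (Set.Icc a b)] fun _ => -(c1/2 * f b ^ e) := by
      have h1 : ∀ᵐ x ∂(volume.restrict (Set.Icc a b)), R ≤ x → c1/2 * f x ^ e ≤ -g x :=
        ae_restrict_of_ae hae
      have h2 : ∀ᵐ x ∂(volume.restrict (Set.Icc a b)), x ∈ Set.Icc a b :=
        ae_restrict_mem measurableSet_Icc
      filter_upwards [h1, h2] with x hx hmem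
      have hRx : R ≤ x := le_trans hRa hmem.1
      have hx0 : 0 < x := lt_of_lt_of_le hR0 hRx
      have h3 : f b ≤ f x := hmono x b hx0 hmem.2
      have h4 : f b ^ e ≤ f x ^ e := Real.rpow_le_rpow (hfnn b hb0) h3 he0
      have h5 := hx hRx
      have h6 : c1/2 * f b ^ e ≤ -g x :=
        le_trans (mul_le_mul_of_nonneg_left h4 (by positivity)) h5
      show g x ≤ -(c1/2 * f b ^ e)
      linarith
    have hmono' := intervalIntegral.integral_mono_ae_restrict hab hint hconst hptwise
    rw [intervalIntegral.integral_const] at hmono'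
    rw [← heq] at hmono'
    have : f b - f a ≤ (b-a) * -(c1/2 * f b ^ e) := by
      simpa [smul_eq_mul] using hmono'
    nlinarith
  -- halving step
  set K : ℝ := 2 * 2^(d-1) / c1 with hK
  have h2d1 : (0:ℝ) < 2^(d-1) := by positivity
  have hK0 : 0 < K := by positivity
  have step : ∀ a, R ≤ a → ∃ b, a ≤ b ∧ f b = f a / 2^d ∧ b - a ≤ K * f a ^ ((1:ℝ)/d) := by
    intro a hRa
    have ha0 : 0 < a := lt_of_lt_of_le hR0 hRa
    have hfa : 0 < f a := hpos a ha0
    set t : ℝ := f a / 2^d with ht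
    have ht0 : 0 < t := by positivity
    have h2dge : (1:ℝ) ≤ 2^d := one_le_pow₀ (by norm_num)
    have htfa : t ≤ f a := div_le_self hfa.le h2dge
    obtain ⟨M1, hM1⟩ := (Filter.tendsto_atTop'.1 hlim) (Set.Iio t) (Iio_mem_nhds ht0)
    set M : ℝ := max M1 a with hM
    have haM : a ≤ M := le_max_right _ _
    have hfM : f M ≤ t := (hM1 M (le_max_left _ _)).le
    obtain ⟨b, hbmem, hfb⟩ := intermediate_value_Icc' haM (hcont a M ha0 haM) ⟨hfM, htfa⟩
    refine ⟨b, hbmem.1, hfb, ?_⟩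
    have hkey := key a b hRa hbmem.1
    rw [hfb] at hkey
    -- compute t ^ e
    have hcast : ((d-1:ℕ):ℝ) = (d:ℝ) - 1 := by
      have h1 : 1 ≤ d := by omega
      push_cast [h1]
      ring
    have h2de : ((2:ℝ)^d) ^ e = (2:ℝ)^(d-1) := by
      rw [← Real.rpow_natCast (2:ℝ) d, ← Real.rpow_mul (by norm_num),
        ← Real.rpow_natCast (2:ℝ) (d-1)]
      congr 1
      rw [hcast, he]
      field_simp
    have hte : t ^ e = f a ^ e / 2^(d-1) := by
      rw [ht, Real.div_rpow hfa.le (by positivity), h2de]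
    have hfae : 0 < f a ^ e := Real.rpow_pos_of_pos hfa e
    have hfa1 : f a = f a ^ ((1:ℝ)/d) * f a ^ e := by
      rw [← Real.rpow_add hfa, hesum, Real.rpow_one]
    have h5 : c1/2 * (b-a) * (f a ^ e / 2^(d-1)) ≤ f a ^ ((1:ℝ)/d) * f a ^ e := by
      rw [← hte, ← hfa1]
      linarith
    have h5' : (c1/2 * (b-a) / 2^(d-1)) * f a ^ e ≤ f a ^ ((1:ℝ)/d) * f a ^ e := by
      have hrw : (c1/2 * (b-a) / 2^(d-1)) * f a ^ e
          = c1/2 * (b-a) * (f a ^ e / 2^(d-1)) := by ring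
      rw [hrw]; exact h5
    have h6 : c1/2 * (b-a) / 2^(d-1) ≤ f a ^ ((1:ℝ)/d) :=
      le_of_mul_le_mul_right h5' hfae
    have h6' : c1/2 * (b-a) ≤ f a ^ ((1:ℝ)/d) * 2^(d-1) := (div_le_iff₀ h2d1).1 h6
    calc b - a = (c1/2 * (b-a)) * (2/c1) := by field_simp
      _ ≤ (f a ^ ((1:ℝ)/d) * 2^(d-1)) * (2/c1) :=
          mul_le_mul_of_nonneg_right h6' (by positivity)
      _ = K * f a ^ ((1:ℝ)/d) := by rw [hK]; ring
  -- build the sequence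
  choose F hF1 hF2 hF3 using step
  let G : {x : ℝ // R ≤ x} → {x : ℝ // R ≤ x} :=
    fun x => ⟨F x.1 x.2, le_trans x.2 (hF1 x.1 x.2)⟩
  let a : ℕ → {x : ℝ // R ≤ x} := fun n => G^[n] ⟨R, le_refl R⟩
  have ha_succ : ∀ n, a (n+1) = G (a n) := fun n => Function.iterate_succ_apply' G n _
  have ha0 : (a 0).1 = R := rfl
  -- f along the sequence
  have hfa : ∀ n, f (a n).1 = f R * ((2:ℝ)^d)⁻¹ ^ n := by
    intro n
    induction n with
    | zero => simp [ha0]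
    | succ n ih =>
      rw [ha_succ]
      have := hF2 (a n).1 (a n).2
      show f (F (a n).1 (a n).2) = _
      rw [this, ih, pow_succ]
      field_simp
  have hfRpos : 0 < f R := hpos R hR0
  set y0 : ℝ := f R ^ ((1:ℝ)/d) with hy0
  have hy0pos : 0 < y0 := Real.rpow_pos_of_pos hfRpos _
  -- f (a n) ^ (1/d) = y0 * 2⁻¹^n
  have hfad : ∀ n, f (a n).1 ^ ((1:ℝ)/d) = y0 * ((2:ℝ)⁻¹) ^ n := by
    intro n
    rw [hfa n, Real.mul_rpow hfRpos.le (by positivity), hy0]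
    congr 1
    have t1 : ((2:ℝ)^d)⁻¹ = (2:ℝ) ^ (-(d:ℝ)) := by
      rw [← Real.rpow_natCast (2:ℝ) d]
      exact (Real.rpow_neg (by norm_num) _).symm
    have t2 : (2:ℝ)⁻¹ = (2:ℝ) ^ (-(1:ℝ)) := (Real.rpow_neg_one 2).symm
    rw [t1, t2, ← Real.rpow_natCast ((2:ℝ)^(-(d:ℝ))) n,
      ← Real.rpow_natCast ((2:ℝ)^(-(1:ℝ))) n,
      ← Real.rpow_mul (by positivity), ← Real.rpow_mul (by positivity),
      ← Real.rpow_mul (by positivity)]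
    congr 1
    field_simp
  -- bound: a n ≤ R + 2 K y0
  have habound : ∀ n, (a n).1 + 2*K*y0 * ((2:ℝ)⁻¹)^n ≤ R + 2*K*y0 := by
    intro n
    induction n with
    | zero => simp [ha0]
    | succ n ih =>
      rw [ha_succ]
      have hstep := hF3 (a n).1 (a n).2
      rw [hfad n] at hstep
      show (F (a n).1 (a n).2) + 2*K*y0 * ((2:ℝ)⁻¹)^(n+1) ≤ R + 2*K*y0
      have : ((2:ℝ)⁻¹)^(n+1) = ((2:ℝ)⁻¹)^n / 2 := by rw [pow_succ]; ring
      rw [this]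
      nlinarith [pow_pos (by norm_num : (0:ℝ) < 2⁻¹) n]
  -- conclude
  set B : ℝ := R + 2*K*y0 with hB
  have hBpos : 0 < B := by positivity
  have hfB : ∀ n, f B ≤ f R * ((2:ℝ)^d)⁻¹ ^ n := by
    intro n
    rw [← hfa n]
    apply hmono (a n).1 B (lt_of_lt_of_le hR0 (a n).2)
    have := habound n
    have hp : 0 < 2*K*y0 * ((2:ℝ)⁻¹)^n := by positivity
    linarith
  have htend : Filter.Tendsto (fun n => f R * ((2:ℝ)^d)⁻¹ ^ n) Filter.atTop (nhds 0) := by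
    rw [show (0:ℝ) = f R * 0 by ring]
    apply Filter.Tendsto.const_mul
    apply tendsto_pow_atTop_nhds_zero_of_lt_one (by positivity)
    rw [inv_lt_one_iff₀]
    right
    exact one_lt_pow₀ (by norm_num) (by omega)
  have hfB0 : f B ≤ 0 := ge_of_tendsto htend (Filter.Eventually.of_forall hfB)
  exact absurd (le_antisymm hfB0 (hfnn B hBpos)) (hcon B hBpos)
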